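/- Let $K, J$ be compact topological spaces with homeomorphisms $T : K \to K$ and $S : J \to J$, and let $\pi : K \to J$ be a continuous surjection with $\pi \circ T = S \circ \pi$. Then the topological entropy satisfies $h_{top}(T) \le h_{top}(S) + \sup_{s \in J} h_{top}(T, \pi^{-1}(s))$, where $h_{top}(T, Q)$ denotes the entropy of $T$ relative to the compact subset $Q$, defined via $(n, U)$-spanning sets for $Q$ with respect to the canonical uniformity of $K$. -/

import Mathlib

open Filter
open scoped ENNReal

/-- The smallest cardinality of an $(n,U)$-spanning set for $Q$ with respect to
$T$, defined via the uniformity of $K$. -/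
noncomputable def spanningNum {K : Type*} [UniformSpace K] (T : K → K) (Q : Set K)
    (n : ℕ) (U : Set (K × K)) : ℕ :=
  sInf {m : ℕ | ∃ E : Finset K, E.card = m ∧
    ∀ s ∈ Q, ∃ t ∈ E, ∀ k < n, (T^[k] s, T^[k] t) ∈ U}

/-- The topological entropy of $T$ relative to the subset $Q$, defined via
$(n,U)$-spanning sets over entourages $U$ of the canonical uniformity. -/
noncomputable def topEnt {K : Type*} [UniformSpace K] (T : K → K) (Q : Set K) : ℝ≥0∞ :=
  ⨆ U ∈ uniformity K, Filter.atTop.limsup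
    (fun n : ℕ => ENNReal.ofReal (Real.log (spanningNum T Q n U) / n))

section helpers

lemma bowen_iterate_comm {K J : Type*} {T : K → K} {S : J → J} {π : K → J}
    (h : π ∘ T = S ∘ π) (k : ℕ) (x : K) : π (T^[k] x) = S^[k] (π x) := by
  induction k with
  | zero => simp
  | succ k ih =>
    rw [Function.iterate_succ_apply', Function.iterate_succ_apply']
    have := congrFun h (T^[k] x)
    simp only [Function.comp_apply] at this
    rw [this, ih]

lemma bowen_ball_open {K : Type*} [UniformSpace K] {T : K → K} (hT : Continuous T)
    {V : Set (K × K)} (hVo : IsOpen V) (n : ℕ) (t : K) :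
    IsOpen {x : K | ∀ k < n, (T^[k] x, T^[k] t) ∈ V} := by
  have : {x : K | ∀ k < n, (T^[k] x, T^[k] t) ∈ V}
      = ⋂ k ∈ Finset.range n, (fun x => (T^[k] x, T^[k] t)) ⁻¹' V := by
    ext x; simp [Set.mem_iInter]
  rw [this]
  exact isOpen_biInter_finset fun k _ =>
    hVo.preimage ((hT.iterate k).prodMk continuous_const)

lemma bowen_spanning_exists {K : Type*} [UniformSpace K] {T : K → K} (hT : Continuous T)
    {Q : Set K} (hQ : IsCompact Q) {V : Set (K × K)} (hVo : IsOpen V)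
    (hVr : ∀ x : K, (x, x) ∈ V) (n : ℕ) :
    ∃ E : Finset K, ∀ s ∈ Q, ∃ t ∈ E, ∀ k < n, (T^[k] s, T^[k] t) ∈ V := by
  classical
  obtain ⟨s, hs⟩ := hQ.elim_finite_subcover
    (fun t : Q => {x : K | ∀ k < n, (T^[k] x, T^[k] (t : K)) ∈ V})
    (fun t => bowen_ball_open hT hVo n t)
    (fun x hx => Set.mem_iUnion.2 ⟨⟨x, hx⟩, fun k _ => hVr _⟩)
  refine ⟨s.image Subtype.val, fun q hq => ?_⟩
  obtain ⟨t, ht, hqt⟩ := Set.mem_iUnion₂.1 (hs hq)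
  exact ⟨t.1, Finset.mem_image_of_mem _ ht, hqt⟩

lemma bowen_spanningNum_le {K : Type*} [UniformSpace K] {T : K → K} {Q : Set K}
    {n : ℕ} {U : Set (K × K)} {E : Finset K}
    (hE : ∀ s ∈ Q, ∃ t ∈ E, ∀ k < n, (T^[k] s, T^[k] t) ∈ U) :
    spanningNum T Q n U ≤ E.card :=
  Nat.sInf_le ⟨E, rfl, hE⟩

lemma bowen_spanningNum_spec {K : Type*} [UniformSpace K] {T : K → K} {Q : Set K}
    {n : ℕ} {U : Set (K × K)} {E₀ : Finset K}
    (hE₀ : ∀ s ∈ Q, ∃ t ∈ E₀, ∀ k < n, (T^[k] s, T^[k] t) ∈ U) :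
    ∃ E : Finset K, E.card = spanningNum T Q n U ∧
      ∀ s ∈ Q, ∃ t ∈ E, ∀ k < n, (T^[k] s, T^[k] t) ∈ U :=
  Nat.sInf_mem (⟨E₀.card, E₀, rfl, hE₀⟩ :
    {m : ℕ | ∃ E : Finset K, E.card = m ∧
      ∀ s ∈ Q, ∃ t ∈ E, ∀ k < n, (T^[k] s, T^[k] t) ∈ U}.Nonempty)

lemma bowen_tube {K J : Type*} [TopologicalSpace K] [CompactSpace K]
    [TopologicalSpace J] [T2Space J] {π : K → J} (hπ : Continuous π)
    {y : J} {G : Set K} (hG : IsOpen G) (hfib : π ⁻¹' {y} ⊆ G) :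
    ∃ W : Set J, IsOpen W ∧ y ∈ W ∧ π ⁻¹' W ⊆ G := by
  refine ⟨(π '' Gᶜ)ᶜ, ?_, ?_, ?_⟩
  · exact ((hG.isClosed_compl.isCompact).image hπ).isClosed.isOpen_compl
  · intro hy
    obtain ⟨x, hxG, hxy⟩ := hy
    exact hxG (hfib (by simp [hxy]))
  · intro x hx
    by_contra hxG
    exact hx ⟨x, hxG, rfl⟩

lemma bowen_eventually_bound {K : Type*} [UniformSpace K] {T : K → K} {Q : Set K}
    {V : Set (K × K)} (hV : V ∈ uniformity K) {c : ℝ} (hc : 0 < c)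
    (h : topEnt T Q < ENNReal.ofReal c) :
    ∀ᶠ n : ℕ in atTop, (spanningNum T Q n V : ℝ) ≤ Real.exp (n * c) := by
  have h1 : Filter.atTop.limsup
      (fun n : ℕ => ENNReal.ofReal (Real.log (spanningNum T Q n V) / n))
      < ENNReal.ofReal c := by
    refine lt_of_le_of_lt ?_ h
    exact le_iSup₂ (f := fun (U : Set (K × K)) (_ : U ∈ uniformity K) =>
      Filter.atTop.limsup
        (fun n : ℕ => ENNReal.ofReal (Real.log (spanningNum T Q n U) / n))) V hV
  have h2 := Filter.eventually_lt_of_limsup_lt h1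
  filter_upwards [h2, Filter.eventually_ge_atTop 1] with n hn hn1
  have hlt : Real.log (spanningNum T Q n V) / n < c :=
    (ENNReal.ofReal_lt_ofReal_iff hc).1 hn
  have hnpos : (0 : ℝ) < n := by exact_mod_cast hn1
  have hlog : Real.log (spanningNum T Q n V) < n * c := by
    rw [div_lt_iff₀ hnpos] at hlt; linarith [hlt]
  rcases Nat.eq_zero_or_pos (spanningNum T Q n V) with h0 | hpos
  · rw [h0]; simpa using (Real.exp_pos _).le
  · have : (0 : ℝ) < (spanningNum T Q n V : ℝ) := by exact_mod_cast hpos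
    exact le_of_lt ((Real.log_lt_iff_lt_exp this).1 hlog)

end helpers

/-- Bowen's inequality in the nonmetrizable setting: if $\pi : K \to J$ is a
continuous surjection intertwining homeomorphisms $T$ and $S$ of compact Hausdorff
spaces, then $h_{top}(T) \le h_{top}(S) + \sup_{s\in J} h_{top}(T, \pi^{-1}(s))$. -/
theorem stmt_14 {K J : Type*} [UniformSpace K] [CompactSpace K] [T2Space K]
    [UniformSpace J] [CompactSpace J] [T2Space J]
    (T : K ≃ₜ K) (S : J ≃ₜ J) (π : K → J) (hπc : Continuous π)
    (hπs : Function.Surjective π) (hcomm : π ∘ ⇑T = ⇑S ∘ π) :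
    topEnt (⇑T) Set.univ ≤ topEnt (⇑S) Set.univ + ⨆ s : J, topEnt (⇑T) (π ⁻¹' {s}) := by
  classical
  set H := topEnt (⇑S) Set.univ with hHdef
  set A := ⨆ s : J, topEnt (⇑T) (π ⁻¹' {s}) with hAdef
  have hmain : topEnt (⇑T) Set.univ ≤ H + A := by
    simp only [topEnt]
    refine iSup₂_le fun U hU => ?_
    rcases isEmpty_or_nonempty K with hK | hK
    · refine le_trans (limsup_le_of_le (by isBoundedDefault) ?_) (zero_le)
      refine Filter.Eventually.of_forall fun n => ?_
      have h0 : spanningNum (⇑T) Set.univ n U = 0 :=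
        le_antisymm (Nat.sInf_le ⟨∅, rfl, fun s _ => (hK.false s).elim⟩) (Nat.zero_le _)
      simp [h0]
    · obtain ⟨x₀⟩ := hK
      by_cases htop : H + A = ⊤
      · rw [htop]; exact le_top
      have hHt : H ≠ ⊤ := fun h => htop (by simp [h])
      have hAt : A ≠ ⊤ := fun h => htop (by simp [h])
      refine ENNReal.le_of_forall_pos_le_add fun ε hε hlt => ?_
      set δ : ℝ := (ε : ℝ) / 4 with hδdef
      have hδpos : 0 < δ := by rw [hδdef]; positivity
      set b : ℝ := H.toReal + δ with hbdef
      set c : ℝ := A.toReal + δ with hcdef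
      have hb : 0 < b := by
        have := ENNReal.toReal_nonneg (a := H); rw [hbdef]; linarith
      have hc : 0 < c := by
        have := ENNReal.toReal_nonneg (a := A); rw [hcdef]; linarith
      have hHb : H < ENNReal.ofReal b :=
        (ENNReal.lt_ofReal_iff_toReal_lt hHt).2 (by rw [hbdef]; linarith)
      have hAc : ∀ y : J, topEnt (⇑T) (π ⁻¹' {y}) < ENNReal.ofReal c := by
        intro y
        refine lt_of_le_of_lt ?_ ((ENNReal.lt_ofReal_iff_toReal_lt hAt).2 (by rw [hcdef]; linarith))
        rw [hAdef]
        exact le_iSup (fun s : J => topEnt (⇑T) (π ⁻¹' {s})) y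
      -- entourage on K
      obtain ⟨V, hV, hVo, hVsymm, hVU⟩ := comp_open_symm_mem_uniformity_sets hU
      have hVr : ∀ x : K, (x, x) ∈ V := fun x => refl_mem_uniformity hV
      -- fiber spanning data
      have fiberdata : ∀ y : J, ∃ (m : ℕ) (E : Finset K), 1 ≤ m ∧
          (E.card : ℝ) ≤ Real.exp (c * m) ∧
          ∀ x ∈ π ⁻¹' {y}, ∃ e ∈ E, ∀ k < m, (T^[k] x, T^[k] e) ∈ V := by
        intro y
        have hcpt : IsCompact (π ⁻¹' {y}) := (isClosed_singleton.preimage hπc).isCompact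
        have hev := bowen_eventually_bound (T := ⇑T) (Q := π ⁻¹' {y}) hV hc (hAc y)
        obtain ⟨m, hm2, hm1⟩ := (hev.and (Filter.eventually_ge_atTop 1)).exists
        obtain ⟨E₀, hE₀⟩ := bowen_spanning_exists T.continuous hcpt hVo hVr m
        obtain ⟨E, hEcard, hEspan⟩ := bowen_spanningNum_spec hE₀
        refine ⟨m, E, hm1, ?_, hEspan⟩
        rw [hEcard, mul_comm]
        exact hm2
      choose nf Ef hnf hEcard hEspan using fiberdata
      -- tube
      have hGopen : ∀ y : J,
          IsOpen {x : K | ∃ e ∈ Ef y, ∀ k < nf y, (T^[k] x, T^[k] e) ∈ V} := by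
        intro y
        have : {x : K | ∃ e ∈ Ef y, ∀ k < nf y, (T^[k] x, T^[k] e) ∈ V}
            = ⋃ e ∈ Ef y, {x : K | ∀ k < nf y, (T^[k] x, T^[k] e) ∈ V} := by
          ext x; simp
        rw [this]
        exact isOpen_biUnion fun e _ => bowen_ball_open T.continuous hVo _ e
      have tube : ∀ y : J, ∃ W : Set J, IsOpen W ∧ y ∈ W ∧
          π ⁻¹' W ⊆ {x : K | ∃ e ∈ Ef y, ∀ k < nf y, (T^[k] x, T^[k] e) ∈ V} :=
        fun y => bowen_tube hπc (hGopen y) (fun x hx => hEspan y x hx)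
      choose Wf hWo hWmem hWsub using tube
      obtain ⟨fs, hfs⟩ := isCompact_univ.elim_finite_subcover Wf hWo
        (fun z _ => Set.mem_iUnion.2 ⟨z, hWmem z⟩)
      obtain ⟨D₀, hD₀, hleb⟩ := lebesgue_number_lemma
        (K := (Set.univ : Set J)) (U := fun i : {y : J // y ∈ fs} => Wf i.1)
        isCompact_univ (fun i => hWo i.1)
        (by
          intro z hz
          obtain ⟨y, hy, hzy⟩ := Set.mem_iUnion₂.1 (hfs hz)
          exact Set.mem_iUnion.2 ⟨⟨y, hy⟩, hzy⟩)
      set D := SetRel.symmetrize D₀ with hDdef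
      have hDu : D ∈ uniformity J := symmetrize_mem_uniformity hD₀
      have hDsymm : ∀ u v : J, (u, v) ∈ D → (v, u) ∈ D := fun u v h =>
        (SetRel.isSymm_symmetrize (R := D₀)).symm u v h
      set M := fs.sup nf with hMdef
      have hcov : ∀ z : J, ∃ y : J, nf y ≤ M ∧
          ∀ x : K, (z, π x) ∈ D → ∃ e ∈ Ef y, ∀ k < nf y, (T^[k] x, T^[k] e) ∈ V := by
        intro z
        obtain ⟨i, hi⟩ := hleb z (Set.mem_univ z)
        refine ⟨i.1, Finset.le_sup i.2, fun x hx => ?_⟩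
        refine hWsub i.1 ?_
        exact hi (SetRel.symmetrize_subset_self (R := D₀) hx)
      -- S side
      have hSev := bowen_eventually_bound (T := ⇑S) (Q := Set.univ) hDu hb hHb
      obtain ⟨D', hD'mem, hD'sub⟩ := (uniformity_hasBasis_open (α := J)).mem_iff.1 hDu
      have hFex : ∀ n : ℕ, ∃ F : Finset J, F.card = spanningNum (⇑S) Set.univ n D ∧
          ∀ z ∈ (Set.univ : Set J), ∃ w ∈ F, ∀ k < n, (S^[k] z, S^[k] w) ∈ D := by
        intro n
        obtain ⟨F₀, hF₀⟩ := bowen_spanning_exists S.continuous isCompact_univ hD'mem.2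
          (fun z => refl_mem_uniformity hD'mem.1) n
        have hF₀' : ∀ z ∈ (Set.univ : Set J), ∃ w ∈ F₀, ∀ k < n, (S^[k] z, S^[k] w) ∈ D := by
          intro z hz
          obtain ⟨w, hw, hwk⟩ := hF₀ z hz
          exact ⟨w, hw, fun k hk => hD'sub (hwk k hk)⟩
        exact bowen_spanningNum_spec hF₀'
      -- key combinatorial induction
      have key : ∀ n : ℕ, ∀ z : J, ∃ (L : Finset (List K)) (σ : K → List K),
          (L.card : ℝ) ≤ Real.exp (c * (n + M)) ∧
          ∀ x : K, (∀ k < n, (S^[k] (π x), S^[k] z) ∈ D) → σ x ∈ L ∧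
            ∀ x' : K, (∀ k < n, (S^[k] (π x'), S^[k] z) ∈ D) → σ x = σ x' →
              ∀ k < n, (T^[k] x, T^[k] x') ∈ U := by
        intro n
        induction n using Nat.strong_induction_on with
        | _ n IH =>
        intro z
        rcases Nat.eq_zero_or_pos n with rfl | hn
        · refine ⟨{[]}, fun _ => [], ?_, fun x _ =>
            ⟨Finset.mem_singleton_self _, fun x' _ _ k hk => absurd hk (Nat.not_lt_zero k)⟩⟩
          simp only [Finset.card_singleton, Nat.cast_one]
          refine Real.one_le_exp ?_
          have : (0:ℝ) ≤ ((0:ℕ):ℝ) + (M:ℝ) := by positivity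
          positivity
        · obtain ⟨y, hyM, hy⟩ := hcov z
          have hx0D : ∀ x : K, (∀ k < n, (S^[k] (π x), S^[k] z) ∈ D) → (z, π x) ∈ D := by
            intro x hx
            have h0 := hx 0 hn
            simp only [Function.iterate_zero, id_eq] at h0
            exact hDsymm _ _ h0
          set χ : K → K := fun x =>
            if hx : ∃ e ∈ Ef y, ∀ k < nf y, (T^[k] x, T^[k] e) ∈ V then hx.choose else x
            with hχdef
          have hχspec : ∀ x : K, (∃ e ∈ Ef y, ∀ k < nf y, (T^[k] x, T^[k] e) ∈ V) →
              χ x ∈ Ef y ∧ ∀ k < nf y, (T^[k] x, T^[k] (χ x)) ∈ V := by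
            intro x hx
            rw [hχdef]
            simp only [dif_pos hx]
            exact ⟨hx.choose_spec.1, hx.choose_spec.2⟩
          have hVV : ∀ (x x' e : K) (k : ℕ), (T^[k] x, T^[k] e) ∈ V →
              (T^[k] x', T^[k] e) ∈ V → (T^[k] x, T^[k] x') ∈ U := by
            intro x x' e k h1 h2
            exact hVU ⟨T^[k] e, h1, hVsymm.symm _ _ h2⟩
          by_cases hmn : nf y ≤ n
          · have hlt : n - nf y < n := by have := hnf y; omega
            obtain ⟨L', σ', hL'card, hL'⟩ := IH (n - nf y) hlt (S^[nf y] z)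
            have hshift : ∀ x : K, (∀ k < n, (S^[k] (π x), S^[k] z) ∈ D) →
                ∀ k < n - nf y, (S^[k] (π (T^[nf y] x)), S^[k] (S^[nf y] z)) ∈ D := by
              intro x hx k hk
              rw [bowen_iterate_comm hcomm, ← Function.iterate_add_apply,
                ← Function.iterate_add_apply]
              exact hx (k + nf y) (by omega)
            refine ⟨(Ef y ×ˢ L').image (fun p => p.1 :: p.2),
              fun x => χ x :: σ' (T^[nf y] x), ?_, ?_⟩
            · calc ((((Ef y ×ˢ L').image (fun p : K × List K => p.1 :: p.2)).card : ℕ) : ℝ)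
                  ≤ (((Ef y ×ˢ L').card : ℕ) : ℝ) := by exact_mod_cast Finset.card_image_le
                _ = ((Ef y).card : ℝ) * (L'.card : ℝ) := by
                    rw [Finset.card_product]; push_cast; ring
                _ ≤ Real.exp (c * nf y) * Real.exp (c * (↑(n - nf y) + M)) := by
                    refine mul_le_mul (hEcard y) hL'card (by positivity) (Real.exp_pos _).le
                _ = Real.exp (c * (n + M)) := by
                    rw [← Real.exp_add]
                    congr 1
                    have hsub : ((n - nf y : ℕ) : ℝ) = (n : ℝ) - (nf y : ℝ) :=
                      Nat.cast_sub hmn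
                    rw [hsub]; ring
            · intro x hx
              have hχx := hχspec x (hy x (hx0D x hx))
              refine ⟨Finset.mem_image.2 ⟨(χ x, σ' (T^[nf y] x)),
                Finset.mem_product.2 ⟨hχx.1, (hL' _ (hshift x hx)).1⟩, rfl⟩, ?_⟩
              intro x' hx' heq k hk
              simp only [List.cons.injEq] at heq
              have hχx' := hχspec x' (hy x' (hx0D x' hx'))
              rcases lt_or_ge k (nf y) with hkm | hkm
              · have h2 := hχx'.2 k hkm
                rw [← heq.1] at h2
                exact hVV x x' (χ x) k (hχx.2 k hkm) h2
              · have hk' : k - nf y < n - nf y := by omega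
                have hcl := (hL' (T^[nf y] x) (hshift x hx)).2 (T^[nf y] x')
                  (hshift x' hx') heq.2 (k - nf y) hk'
                have hrw : ∀ w : K, T^[k - nf y] (T^[nf y] w) = T^[k] w := by
                  intro w
                  rw [← Function.iterate_add_apply]
                  congr 1
                  omega
                rwa [hrw, hrw] at hcl
          · refine ⟨(Ef y).image (fun e => [e]), fun x => [χ x], ?_, ?_⟩
            · calc ((((Ef y).image (fun e : K => [e])).card : ℕ) : ℝ)
                  ≤ ((Ef y).card : ℝ) := by exact_mod_cast Finset.card_image_le
                _ ≤ Real.exp (c * nf y) := hEcard y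
                _ ≤ Real.exp (c * (n + M)) := by
                    refine Real.exp_le_exp.2 ?_
                    have h1 : (nf y : ℝ) ≤ (n : ℝ) + (M : ℝ) := by
                      have : (nf y : ℝ) ≤ (M : ℝ) := by exact_mod_cast hyM
                      have hn0 : (0:ℝ) ≤ (n : ℝ) := by positivity
                      linarith
                    nlinarith [hc.le]
            · intro x hx
              have hχx := hχspec x (hy x (hx0D x hx))
              refine ⟨Finset.mem_image_of_mem _ hχx.1, ?_⟩
              intro x' hx' heq k hk
              simp only [List.cons.injEq] at heq
              have hχx' := hχspec x' (hy x' (hx0D x' hx'))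
              have h2 := hχx'.2 k (by omega)
              rw [← heq.1] at h2
              exact hVV x x' (χ x) k (hχx.2 k (by omega)) h2
      choose Lf σf hLcard hLspec using key
      have main : ∀ᶠ n : ℕ in atTop, (spanningNum (⇑T) Set.univ n U : ℝ) ≤
          Real.exp (n * b) * Real.exp (c * (n + M)) := by
        filter_upwards [hSev] with n hn
        obtain ⟨F, hFcard, hFspan⟩ := hFex n
        set rep : J → List K → K := fun z l =>
          if h : ∃ x : K, (∀ k < n, (S^[k] (π x), S^[k] z) ∈ D) ∧ σf n z x = l
          then h.choose else x₀ with hrepdef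
        have hspan : ∀ s ∈ (Set.univ : Set K),
            ∃ t ∈ F.biUnion (fun z => (Lf n z).image (rep z)),
              ∀ k < n, (T^[k] s, T^[k] t) ∈ U := by
          intro x _
          obtain ⟨z, hzF, hxz⟩ := hFspan (π x) (Set.mem_univ _)
          have hσ := hLspec n z x hxz
          have hex : ∃ x' : K, (∀ k < n, (S^[k] (π x'), S^[k] z) ∈ D) ∧
              σf n z x' = σf n z x := ⟨x, hxz, rfl⟩
          refine ⟨rep z (σf n z x),
            Finset.mem_biUnion.2 ⟨z, hzF, Finset.mem_image_of_mem _ hσ.1⟩, ?_⟩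
          rw [hrepdef]
          simp only [dif_pos hex]
          exact fun k hk => hσ.2 _ hex.choose_spec.1 hex.choose_spec.2.symm k hk
        have hsle : (spanningNum (⇑T) Set.univ n U : ℝ) ≤
            ((F.biUnion (fun z => (Lf n z).image (rep z))).card : ℝ) := by
          exact_mod_cast bowen_spanningNum_le hspan
        have h1 : ((F.biUnion (fun z => (Lf n z).image (rep z))).card : ℝ)
            ≤ ∑ z ∈ F, (((Lf n z).image (rep z)).card : ℝ) := by
          exact_mod_cast Finset.card_biUnion_le
        have h2 : ∑ z ∈ F, (((Lf n z).image (rep z)).card : ℝ)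
            ≤ ∑ z ∈ F, Real.exp (c * (n + M)) :=
          Finset.sum_le_sum fun z _ =>
            le_trans (by exact_mod_cast Finset.card_image_le) (hLcard n z)
        have h3 : ∑ z ∈ F, Real.exp (c * (n + M))
            = (F.card : ℝ) * Real.exp (c * (n + M)) := by
          rw [Finset.sum_const, nsmul_eq_mul]
        have h4 : (F.card : ℝ) ≤ Real.exp (n * b) := by rw [hFcard]; exact hn
        calc (spanningNum (⇑T) Set.univ n U : ℝ) ≤ _ := hsle
          _ ≤ _ := h1
          _ ≤ _ := h2
          _ = _ := h3
          _ ≤ Real.exp (n * b) * Real.exp (c * (n + M)) :=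
            mul_le_mul_of_nonneg_right h4 (Real.exp_pos _).le
      have hMδ : ∀ᶠ n : ℕ in atTop, c * M / n ≤ δ :=
        (tendsto_const_div_atTop_nhds_zero_nat (c * M)).eventually (eventually_le_nhds hδpos)
      have hfinal : ∀ᶠ n : ℕ in atTop,
          ENNReal.ofReal (Real.log (spanningNum (⇑T) Set.univ n U) / n)
            ≤ ENNReal.ofReal (b + c + δ) := by
        filter_upwards [main, hMδ, Filter.eventually_ge_atTop 1] with n hmain hM1 hn1
        refine ENNReal.ofReal_le_ofReal ?_
        have hnpos : (0:ℝ) < n := by exact_mod_cast hn1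
        have hMn : c * M ≤ δ * n := by
          rw [div_le_iff₀ hnpos] at hM1; linarith
        have hlog : Real.log (spanningNum (⇑T) Set.univ n U) ≤ n * b + c * (n + M) := by
          rcases Nat.eq_zero_or_pos (spanningNum (⇑T) Set.univ n U) with h0 | hpos
          · rw [h0]
            simp only [Nat.cast_zero, Real.log_zero]
            have hM0 : (0:ℝ) ≤ (M:ℝ) := by positivity
            nlinarith [hb.le, hc.le, hnpos.le]
          · have hgt : (0:ℝ) < (spanningNum (⇑T) Set.univ n U : ℝ) := by exact_mod_cast hpos
            rw [Real.log_le_iff_le_exp hgt, Real.exp_add]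
            exact hmain
        rw [div_le_iff₀ hnpos]
        nlinarith [hlog, hMn]
      refine le_trans (limsup_le_of_le (by isBoundedDefault) hfinal) ?_
      have hbcd : b + c + δ = H.toReal + A.toReal + 3 * δ := by rw [hbdef, hcdef]; ring
      rw [hbcd]
      have h3δ : (3:ℝ) * δ ≤ (ε : ℝ) := by
        rw [hδdef]
        have hε0 : (0:ℝ) ≤ (ε:ℝ) := ε.coe_nonneg
        linarith
      calc ENNReal.ofReal (H.toReal + A.toReal + 3 * δ)
          ≤ ENNReal.ofReal (H.toReal + A.toReal) + ENNReal.ofReal (3 * δ) :=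
            ENNReal.ofReal_add_le
        _ ≤ (ENNReal.ofReal H.toReal + ENNReal.ofReal A.toReal) + ENNReal.ofReal (3 * δ) :=
            add_le_add_left ENNReal.ofReal_add_le _
        _ ≤ H + A + (ε : ℝ≥0∞) := by
            rw [ENNReal.ofReal_toReal hHt, ENNReal.ofReal_toReal hAt]
            refine add_le_add_right ?_ _
            calc ENNReal.ofReal (3 * δ)
                ≤ ENNReal.ofReal (ε : ℝ) := ENNReal.ofReal_le_ofReal h3δ
              _ = (ε : ℝ≥0∞) := ENNReal.ofReal_coe_nnreal
  exact hmain
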